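/- (Lemma 6.9, population computers for threshold predicates) Let φ = (a1x1+…+avxv ≥ c) be a threshold predicate with c ∈ ℕ and each a_i ∈ {2^j, −2^j : j ≥ 0}. For every integer d ≥ 1 with 2^{d−1} ≥ c and |a_i| ≤ 2^d for all i, there exists a bounded binary population computer P=(Q,δ,I,O,H) with set of states Q = {0} ∪ {2^i, −2^i : 0 ≤ i ≤ d} (hence 2d+3 states), input states I = {a1,…,av}, helper multiset H consisting of d agents in state 0, and output function satisfying O(S)=1 iff Σ_{q∈S} q ≥ c, such that P decides φ (for every x ∈ ℕ^v the input with x_i agents in state a_i has output 1 iff Σa_ix_i ≥ c); moreover every run of P from an initial configuration with n agents has length at most n. -/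

import Mathlib

open scoped ENNReal Classical

namespace PaperPP

/-- Population computers (Angluin-style generalization). -/
structure PopComputer (σ : Type) where
  Q : Finset σ
  δ : Finset (Multiset σ × Multiset σ)
  I : Finset σ
  O : Finset σ → Option Bool
  H : Multiset σ
  delta_mem : ∀ t ∈ δ, ∀ q ∈ t.1 + t.2, q ∈ Q
  delta_card : ∀ t ∈ δ, Multiset.card t.2 = Multiset.card t.1 ∧ 2 ≤ Multiset.card t.1
  delta_supp : ∀ t ∈ δ, ∃ a b : σ, ∀ q ∈ t.1, q = a ∨ q = b
  delta_fun : ∀ t ∈ δ, ∀ u ∈ δ, t.1 = u.1 → t.2 = u.2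
  I_sub : I ⊆ Q
  H_mem : ∀ q ∈ H, q ∈ Q ∧ q ∉ I

variable {σ : Type}

def Step (P : PopComputer σ) (C C' : Multiset σ) : Prop :=
  ∃ t ∈ P.δ, t.1 ≤ C ∧ C' = C - t.1 + t.2

def Reaches (P : PopComputer σ) : Multiset σ → Multiset σ → Prop :=
  Relation.ReflTransGen (Step P)

def Terminal (P : PopComputer σ) (C : Multiset σ) : Prop :=
  ∀ t ∈ P.δ, ¬ t.1 ≤ C

def IsInput (P : PopComputer σ) (C : Multiset σ) : Prop :=
  ∀ q ∈ C, q ∈ P.I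

def Initial (P : PopComputer σ) (CI C0 : Multiset σ) : Prop :=
  ∃ CH : Multiset σ, (∀ q ∈ CH, q ∈ P.H) ∧ P.H ≤ CH ∧ C0 = CI + CH

def ReachableConfig (P : PopComputer σ) (C : Multiset σ) : Prop :=
  ∃ CI C0, IsInput P CI ∧ Initial P CI C0 ∧ Reaches P C0 C

def IsRun (P : PopComputer σ) (f : ℕ → Multiset σ) : Prop :=
  ∀ i, Step P (f i) (f (i + 1)) ∨ (Terminal P (f i) ∧ f (i + 1) = f i)

def FairRun (P : PopComputer σ) (f : ℕ → Multiset σ) : Prop :=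
  IsRun P f ∧ ∀ C : Multiset σ, {i | Reaches P (f i) C}.Infinite → ∃ j, f j = C

def StabilizesTo [DecidableEq σ] (P : PopComputer σ) (f : ℕ → Multiset σ) (b : Bool) : Prop :=
  ∃ i, ∀ C, Reaches P (f i) C → P.O C.toFinset = some b

def HasOutput [DecidableEq σ] (P : PopComputer σ) (CI : Multiset σ) (b : Bool) : Prop :=
  ∀ C0 f, Initial P CI C0 → FairRun P f → f 0 = C0 → StabilizesTo P f b

def Decides [DecidableEq σ] (P : PopComputer σ) (φ : Multiset σ → Bool) : Prop :=
  ∀ CI, IsInput P CI → HasOutput P CI (φ CI)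

def Bounded (P : PopComputer σ) : Prop :=
  ¬ ∃ f : ℕ → Multiset σ,
      (∃ CI, IsInput P CI ∧ Initial P CI (f 0)) ∧ ∀ i, Step P (f i) (f (i + 1))

def Terminating (P : PopComputer σ) : Prop :=
  ∀ f : ℕ → Multiset σ, (∃ CI, IsInput P CI ∧ Initial P CI (f 0)) → FairRun P f →
    ∃ i, Terminal P (f i)

def Binary (P : PopComputer σ) : Prop := ∀ t ∈ P.δ, Multiset.card t.1 = 2

def ConsensusOutput [DecidableEq σ] (P : PopComputer σ) : Prop :=
  ∃ Q1 : Finset σ, Q1 ⊆ P.Q ∧ ∀ S : Finset σ, S ⊆ P.Q → S.Nonempty →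
    P.O S = if S ⊆ Q1 then some true else if S ⊆ P.Q \ Q1 then some false else none

def MarkedConsensusOutput [DecidableEq σ] (P : PopComputer σ) : Prop :=
  ∃ Q0 Q1 : Finset σ, Q0 ⊆ P.Q ∧ Q1 ⊆ P.Q ∧ Disjoint Q0 Q1 ∧
    ∀ S : Finset σ, S ⊆ P.Q → S.Nonempty →
      P.O S = if (S ∩ Q1).Nonempty ∧ S ∩ Q0 = ∅ then some true
        else if (S ∩ Q0).Nonempty ∧ S ∩ Q1 = ∅ then some false else none

def IsProtocol [DecidableEq σ] (P : PopComputer σ) : Prop :=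
  Binary P ∧ P.H = 0 ∧ ConsensusOutput P

/-! Boolean circuits, used to measure the size of output functions. -/

inductive Circ (α : Type) : Type where
  | inp : α → Circ α
  | tru : Circ α
  | fal : Circ α
  | neg : Circ α → Circ α
  | conj : Circ α → Circ α → Circ α
  | disj : Circ α → Circ α → Circ α

def Circ.eval {α : Type} (v : α → Bool) : Circ α → Bool
  | .inp a => v a
  | .tru => true
  | .fal => false
  | .neg c => !(Circ.eval v c)
  | .conj c d => Circ.eval v c && Circ.eval v d
  | .disj c d => Circ.eval v c || Circ.eval v d

def Circ.gates {α : Type} : Circ α → ℕ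
  | .inp _ => 1
  | .tru => 1
  | .fal => 1
  | .neg c => Circ.gates c + 1
  | .conj c d => Circ.gates c + Circ.gates d + 1
  | .disj c d => Circ.gates c + Circ.gates d + 1

noncomputable def outSize [DecidableEq σ] (P : PopComputer σ) : ℕ :=
  sInf {n | ∃ cd cv : Circ σ, Circ.gates cd + Circ.gates cv = n ∧
    ∀ S : Finset σ, S ⊆ P.Q →
      P.O S = if Circ.eval (fun q => decide (q ∈ S)) cd then
          some (Circ.eval (fun q => decide (q ∈ S)) cv) else none}

noncomputable def csize [DecidableEq σ] (P : PopComputer σ) : ℕ :=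
  P.Q.card + Multiset.card P.H + outSize P + ∑ t ∈ P.δ, Multiset.card t.1

noncomputable def asize [DecidableEq σ] (P : PopComputer σ) : ℕ :=
  P.Q.card + Multiset.card P.H + outSize P

/-! Probabilistic execution model. -/

def pairCount [DecidableEq σ] (C r : Multiset σ) : ℕ :=
  (Multiset.powersetCard 2 C).count r

noncomputable def stepKer [DecidableEq σ] (P : PopComputer σ) (C C' : Multiset σ) : ℝ≥0∞ :=
  (∑ t ∈ P.δ, if t.1 ≤ C ∧ C' = C - t.1 + t.2 then (pairCount C t.1 : ℝ≥0∞) else 0) /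
      (Nat.choose (Multiset.card C) 2 : ℝ≥0∞) +
    (if C' = C then
      1 - (∑ t ∈ P.δ, (pairCount C t.1 : ℝ≥0∞)) / (Nat.choose (Multiset.card C) 2 : ℝ≥0∞)
    else 0)

noncomputable def hitKer [DecidableEq σ] (P : PopComputer σ) (A : Set (Multiset σ))
    (C C' : Multiset σ) : ℝ≥0∞ :=
  if C ∈ A then (if C' = C then 1 else 0) else stepKer P C C'

noncomputable def hitIter [DecidableEq σ] (P : PopComputer σ) (A : Set (Multiset σ)) :
    ℕ → Multiset σ → Multiset σ → ℝ≥0∞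
  | 0, C, C' => if C' = C then 1 else 0
  | n + 1, C, C' => ∑' D : Multiset σ, hitIter P A n C D * hitKer P A D C'

/-- Expected hitting time of the set `A`, computed as `∑ₜ Pr[Xₜ ∉ A]` for the chain
absorbed at `A`. -/
noncomputable def expHit [DecidableEq σ] (P : PopComputer σ) (A : Set (Multiset σ))
    (C0 : Multiset σ) : ℝ≥0∞ :=
  ∑' n : ℕ, ∑' C : Multiset σ, if C ∈ A then 0 else hitIter P A n C0 C

def StableConfig [DecidableEq σ] (P : PopComputer σ) (C : Multiset σ) : Prop :=
  ∃ b : Bool, ∀ C', Reaches P C C' → P.O C'.toFinset = some b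

noncomputable def expTermination [DecidableEq σ] (P : PopComputer σ) (C0 : Multiset σ) : ℝ≥0∞ :=
  expHit P {C | Terminal P C} C0

noncomputable def expStabilization [DecidableEq σ] (P : PopComputer σ) (C0 : Multiset σ) : ℝ≥0∞ :=
  expHit P {C | StableConfig P C} C0

/-! Quantifier-free Presburger arithmetic. -/

inductive QFPA (v : ℕ) : Type where
  | threshold (a : Fin v → ℤ) (c : ℤ) : QFPA v
  | remainder (a : Fin v → ℤ) (θ : ℕ) (c : Fin θ) : QFPA v
  | not (φ : QFPA v) : QFPA v
  | and (φ ψ : QFPA v) : QFPA v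
  | or (φ ψ : QFPA v) : QFPA v

def QFPA.eval {v : ℕ} : QFPA v → (Fin v → ℕ) → Bool
  | .threshold a c, x => decide (c ≤ ∑ i, a i * (x i : ℤ))
  | .remainder a θ c, x => decide ((∑ i, a i * (x i : ℤ)) % (θ : ℤ) = ((c : ℕ) : ℤ))
  | .not φ, x => !(QFPA.eval φ x)
  | .and φ ψ, x => QFPA.eval φ x && QFPA.eval ψ x
  | .or φ ψ, x => QFPA.eval φ x || QFPA.eval ψ x

def zsize (z : ℤ) : ℕ := Nat.size z.natAbs + 1

def QFPA.fsize {v : ℕ} : QFPA v → ℕ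
  | .threshold a c => (∑ i, zsize (a i)) + zsize c + 1
  | .remainder a θ c => (∑ i, zsize (a i)) + Nat.size θ + Nat.size (c : ℕ) + 1
  | .not φ => QFPA.fsize φ + 1
  | .and φ ψ => QFPA.fsize φ + QFPA.fsize ψ + 1
  | .or φ ψ => QFPA.fsize φ + QFPA.fsize ψ + 1

def QFPA.double {v : ℕ} : QFPA v → QFPA (v + v)
  | .threshold a c =>
      .threshold (fun i => Fin.addCases (fun j => a j) (fun j => 2 * a j) i) c
  | .remainder a θ c =>
      .remainder (fun i => Fin.addCases (fun j => a j) (fun j => 2 * a j) i) θ c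
  | .not φ => .not (QFPA.double φ)
  | .and φ ψ => .and (QFPA.double φ) (QFPA.double ψ)
  | .or φ ψ => .or (QFPA.double φ) (QFPA.double ψ)

def inputConfig {v : ℕ} (lab : Fin v → σ) (x : Fin v → ℕ) : Multiset σ :=
  ∑ i : Fin v, Multiset.replicate (x i) (lab i)

def DecidesQFPA [DecidableEq σ] {v : ℕ} (P : PopComputer σ) (lab : Fin v → σ)
    (φ : QFPA v) : Prop :=
  Function.Injective lab ∧ P.I = Finset.univ.image lab ∧
    ∀ x : Fin v → ℕ, HasOutput P (inputConfig lab x) (QFPA.eval φ x)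

def DecidesQFPAFrom [DecidableEq σ] {v : ℕ} (P : PopComputer σ) (lab : Fin v → σ)
    (φ : QFPA v) (k : ℕ) : Prop :=
  Function.Injective lab ∧ P.I = Finset.univ.image lab ∧
    ∀ x : Fin v → ℕ, k ≤ ∑ i, x i → HasOutput P (inputConfig lab x) (QFPA.eval φ x)

/-! Potential functions and rapidness. -/

def mweight (w : σ → ℕ) (C : Multiset σ) : ℕ := (C.map w).sum

def IsPotential (P : PopComputer σ) (w : σ → ℕ) : Prop :=
  ∀ t ∈ P.δ, mweight w t.2 + (Multiset.card t.1 - 1) ≤ mweight w t.1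

def tmin [DecidableEq σ] (C r : Multiset σ) : ℕ :=
  if h : r.toFinset.Nonempty then r.toFinset.inf' h (fun q => C.count q) else 0

def speedOn [DecidableEq σ] (T : Finset (Multiset σ × Multiset σ)) (C : Multiset σ) : ℕ :=
  ∑ t ∈ T, (tmin C t.1) ^ 2

def speed [DecidableEq σ] (P : PopComputer σ) (C : Multiset σ) : ℕ := speedOn P.δ C

def RapidAt [DecidableEq σ] (P : PopComputer σ) (w : σ → ℕ) (α : ℝ) (C : Multiset σ) : Prop :=
  ∀ Cterm, Reaches P C Cterm → Terminal P Cterm →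
    ((mweight w C : ℝ) - (mweight w Cterm : ℝ)) ^ 2 / α ≤ (speed P C : ℝ)

def countIn [DecidableEq σ] (P : PopComputer σ) (C : Multiset σ) : ℕ :=
  ∑ q ∈ P.I, C.count q

def WellInitialised [DecidableEq σ] (P : PopComputer σ) (C : Multiset σ) : Prop :=
  ReachableConfig P C ∧ 3 * (countIn P C + Multiset.card P.H) ≤ 2 * Multiset.card C

def outdeg [DecidableEq σ] (P : PopComputer σ) (q : σ) : ℕ :=
  (P.δ.filter (fun t => q ∈ t.1)).card

def IsRapid [DecidableEq σ] (P : PopComputer σ) (α : ℝ) : Prop :=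
  (∃ w : σ → ℕ, IsPotential P w ∧ ∀ C, WellInitialised P C → RapidAt P w α C) ∧
  (∃ q0 : σ, ∀ q ∈ P.Q, q ≠ q0 → outdeg P q ≤ 2) ∧
  (∀ C : Multiset σ, IsInput P C → Terminal P C) ∧
  (∀ t ∈ P.δ, ∀ q ∈ P.I, t.1.count q ≤ 1 ∧ t.2.count q = 0)

def deltaGt [DecidableEq σ] (P : PopComputer σ) (w : σ → ℕ) :
    Finset (Multiset σ × Multiset σ) :=
  P.δ.filter (fun t => mweight w t.2 < mweight w t.1)

def deltaLt [DecidableEq σ] (P : PopComputer σ) (w : σ → ℕ) :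
    Finset (Multiset σ × Multiset σ) :=
  P.δ.filter (fun t => mweight w t.1 < mweight w t.2)

def RapidAtGt [DecidableEq σ] (P : PopComputer σ) (w : σ → ℕ) (α : ℝ) (C : Multiset σ) : Prop :=
  ∀ Cterm, Reaches P C Cterm → Terminal P Cterm →
    ((mweight w C : ℝ) - (mweight w Cterm : ℝ)) ^ 2 / α ≤ (speedOn (deltaGt P w) C : ℝ)

def GroupRapidAt [DecidableEq σ] (P : PopComputer σ) {e : ℕ} (w : Fin e → σ → ℕ) (α : ℝ)
    (C : Multiset σ) : Prop :=
  Terminal P C ∨ ∃ i : Fin e,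
    RapidAtGt P (w i) α C ∧
    (∃ t ∈ deltaGt P (w i), t.1 ≤ C) ∧
    (∀ C', Reaches P C C' → ∀ t ∈ deltaLt P (w i), ¬ t.1 ≤ C')

/-- Refinement between computers over the same state space. -/
def Refines [DecidableEq σ] (P' P : PopComputer σ) (π : Multiset σ → Multiset σ) : Prop :=
  (∀ C D, ReachableConfig P' C → ReachableConfig P' D → Step P' C D →
    Reaches P (π C) (π D)) ∧
  (P.I = P'.I ∧ ∀ CI C, IsInput P' CI → Initial P' CI C →
    ((∃ DI, IsInput P DI ∧ Initial P DI (π C)) ∧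
      ∀ q ∈ P.I, (π C).count q = C.count q)) ∧
  (∀ C, ReachableConfig P' C → Terminal P' C →
    Terminal P (π C) ∧ P.O (π C).toFinset = P'.O C.toFinset)

/-- States. -/
def Qset (d : ℕ) : Finset ℤ :=
  insert 0 ((((Finset.range (d + 1)).image fun j => (2 : ℤ) ^ j) ∪
              ((Finset.range (d + 1)).image fun j => -((2 : ℤ) ^ j))))

/-- Left-hand sides of transitions. -/
def lhsSet (d : ℕ) : Finset (Multiset ℤ) :=
  ((Finset.range d).image fun j => ({(2:ℤ)^j, (2:ℤ)^j} : Multiset ℤ)) ∪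
  ((Finset.range d).image fun j => ({-(2:ℤ)^j, -(2:ℤ)^j} : Multiset ℤ)) ∪
  ((Finset.range (d+1)).image fun j => ({(2:ℤ)^j, -(2:ℤ)^j} : Multiset ℤ)) ∪
  ((Finset.range d).image fun j => ({(2:ℤ)^(j+1), -(2:ℤ)^j} : Multiset ℤ)) ∪
  ((Finset.range d).image fun j => ({-(2:ℤ)^(j+1), (2:ℤ)^j} : Multiset ℤ))

def deltaSet (d : ℕ) : Finset (Multiset ℤ × Multiset ℤ) :=
  (lhsSet d).image fun r => (r, ({r.sum, 0} : Multiset ℤ))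

lemma zero_mem_Qset (d : ℕ) : (0:ℤ) ∈ Qset d := by simp [Qset]

lemma pow_mem_Qset {d j : ℕ} (h : j ≤ d) : (2:ℤ)^j ∈ Qset d := by
  simp only [Qset, Finset.mem_insert, Finset.mem_union, Finset.mem_image, Finset.mem_range]
  exact Or.inr (Or.inl ⟨j, by omega, rfl⟩)

lemma neg_pow_mem_Qset {d j : ℕ} (h : j ≤ d) : -(2:ℤ)^j ∈ Qset d := by
  simp only [Qset, Finset.mem_insert, Finset.mem_union, Finset.mem_image, Finset.mem_range]
  exact Or.inr (Or.inr ⟨j, by omega, rfl⟩)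

lemma mem_Qset_iff {d : ℕ} {q : ℤ} :
    q ∈ Qset d ↔ q = 0 ∨ ∃ j ≤ d, q = (2:ℤ)^j ∨ q = -(2:ℤ)^j := by
  simp only [Qset, Finset.mem_insert, Finset.mem_union, Finset.mem_image, Finset.mem_range]
  constructor
  · rintro (h | ⟨j, hj, rfl⟩ | ⟨j, hj, rfl⟩)
    · exact Or.inl h
    · exact Or.inr ⟨j, by omega, Or.inl rfl⟩
    · exact Or.inr ⟨j, by omega, Or.inr rfl⟩
  · rintro (h | ⟨j, hj, rfl | rfl⟩)
    · exact Or.inl h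
    · exact Or.inr (Or.inl ⟨j, by omega, rfl⟩)
    · exact Or.inr (Or.inr ⟨j, by omega, rfl⟩)

lemma lhs_spec {d : ℕ} {r : Multiset ℤ} (hr : r ∈ lhsSet d) :
    ∃ x y : ℤ, r = ({x, y} : Multiset ℤ) ∧ x ≠ 0 ∧ y ≠ 0 ∧
      x ∈ Qset d ∧ y ∈ Qset d ∧ x + y ∈ Qset d := by
  have pow_pos : ∀ j : ℕ, (0:ℤ) < 2^j := fun j => pow_pos (by norm_num) j
  simp only [lhsSet, Finset.mem_union, Finset.mem_image, Finset.mem_range] at hr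
  rcases hr with ((((⟨j, hj, rfl⟩ | ⟨j, hj, rfl⟩) | ⟨j, hj, rfl⟩) | ⟨j, hj, rfl⟩) | ⟨j, hj, rfl⟩)
  · refine ⟨_, _, rfl, (pow_pos j).ne', (pow_pos j).ne',
      pow_mem_Qset (by omega), pow_mem_Qset (by omega), ?_⟩
    have : (2:ℤ)^j + 2^j = 2^(j+1) := by rw [pow_succ]; ring
    rw [this]; exact pow_mem_Qset (by omega)
  · refine ⟨_, _, rfl, (neg_ne_zero.mpr (pow_pos j).ne'), (neg_ne_zero.mpr (pow_pos j).ne'),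
      neg_pow_mem_Qset (by omega), neg_pow_mem_Qset (by omega), ?_⟩
    have : -(2:ℤ)^j + -(2:ℤ)^j = -(2^(j+1)) := by rw [pow_succ]; ring
    rw [this]; exact neg_pow_mem_Qset (by omega)
  · refine ⟨_, _, rfl, (pow_pos j).ne', (neg_ne_zero.mpr (pow_pos j).ne'),
      pow_mem_Qset (by omega), neg_pow_mem_Qset (by omega), ?_⟩
    have : (2:ℤ)^j + -(2:ℤ)^j = 0 := by ring
    rw [this]; exact zero_mem_Qset d
  · refine ⟨_, _, rfl, (pow_pos (j+1)).ne', (neg_ne_zero.mpr (pow_pos j).ne'),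
      pow_mem_Qset (by omega), neg_pow_mem_Qset (by omega), ?_⟩
    have : (2:ℤ)^(j+1) + -(2:ℤ)^j = 2^j := by rw [pow_succ]; ring
    rw [this]; exact pow_mem_Qset (by omega)
  · refine ⟨_, _, rfl, (neg_ne_zero.mpr (pow_pos (j+1)).ne'), (pow_pos j).ne',
      neg_pow_mem_Qset (by omega), pow_mem_Qset (by omega), ?_⟩
    have : -(2:ℤ)^(j+1) + (2:ℤ)^j = -(2^j) := by rw [pow_succ]; ring
    rw [this]; exact neg_pow_mem_Qset (by omega)


def thComp (d c : ℕ) (I : Finset ℤ) (hI : I ⊆ Qset d) (hI0 : (0:ℤ) ∉ I) : PopComputer ℤ where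
  Q := Qset d
  δ := deltaSet d
  I := I
  O := fun S => some (decide ((c:ℤ) ≤ ∑ q ∈ S, q))
  H := Multiset.replicate d 0
  delta_mem := by
    intro t ht q hq
    simp only [deltaSet, Finset.mem_image] at ht
    obtain ⟨r, hr, rfl⟩ := ht
    obtain ⟨x, y, rfl, -, -, hx, hy, hs⟩ := lhs_spec hr
    simp only [Multiset.mem_add, Multiset.insert_eq_cons, Multiset.mem_cons,
      Multiset.mem_singleton, Multiset.sum_cons, Multiset.sum_singleton] at hq
    rcases hq with (rfl | rfl) | (rfl | rfl)
    · exact hx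
    · exact hy
    · simpa using hs
    · exact zero_mem_Qset d
  delta_card := by
    intro t ht
    simp only [deltaSet, Finset.mem_image] at ht
    obtain ⟨r, hr, rfl⟩ := ht
    obtain ⟨x, y, rfl, -⟩ := lhs_spec hr
    simp
  delta_supp := by
    intro t ht
    simp only [deltaSet, Finset.mem_image] at ht
    obtain ⟨r, hr, rfl⟩ := ht
    obtain ⟨x, y, rfl, -⟩ := lhs_spec hr
    exact ⟨x, y, by simp⟩
  delta_fun := by
    intro t ht u hu h
    simp only [deltaSet, Finset.mem_image] at ht hu
    obtain ⟨r, hr, rfl⟩ := ht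
    obtain ⟨r', hr', rfl⟩ := hu
    simp only at h ⊢
    rw [h]
  I_sub := hI
  H_mem := by
    intro q hq
    rw [Multiset.eq_of_mem_replicate hq]
    exact ⟨zero_mem_Qset d, hI0⟩


lemma thComp_delta (d c : ℕ) (I : Finset ℤ) (hI : I ⊆ Qset d) (hI0 : (0:ℤ) ∉ I) :
    (thComp d c I hI hI0).δ = deltaSet d := rfl

lemma pow2_le_iff {j d : ℕ} : (2:ℤ)^j ≤ 2^d ↔ j ≤ d := by
  rw [show ((2:ℤ)) = ((2:ℕ):ℤ) by norm_num, ← Nat.cast_pow, ← Nat.cast_pow, Nat.cast_le]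
  exact Nat.pow_le_pow_iff_right (by norm_num)

lemma msum_sum {ι : Type} (s : Finset ι) (g : ι → Multiset ℤ) :
    (∑ i ∈ s, g i).sum = ∑ i ∈ s, (g i).sum := by
  induction s using Finset.cons_induction with
  | empty => simp
  | cons a t ha ih => rw [Finset.sum_cons, Finset.sum_cons, Multiset.sum_add, ih]

lemma inputConfig_sum {v : ℕ} (a : Fin v → ℤ) (x : Fin v → ℕ) :
    (inputConfig a x).sum = ∑ i, a i * (x i : ℤ) := by
  rw [inputConfig, msum_sum]
  refine Finset.sum_congr rfl fun i _ => ?_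
  rw [Multiset.sum_replicate, nsmul_eq_mul, mul_comm]

lemma inputConfig_mem {v : ℕ} {a : Fin v → ℤ} {x : Fin v → ℕ} {q : ℤ}
    (h : q ∈ inputConfig a x) : ∃ i, q = a i := by
  rw [inputConfig, Multiset.mem_sum] at h
  obtain ⟨i, -, hi⟩ := h
  exact ⟨i, Multiset.eq_of_mem_replicate hi⟩
/-! pair lemmas -/
lemma instEq : (fun (a b : ℤ) => Classical.propDecidable (a = b)) = (Int.instDecidableEq : DecidableEq ℤ) := by
  funext a b; exact Subsingleton.elim _ _

lemma count_pair (x y b : ℤ) :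
    Multiset.count b ({x, y} : Multiset ℤ) = (if b = x then 1 else 0) + (if b = y then 1 else 0) := by
  rw [Multiset.insert_eq_cons, Multiset.count_cons, Multiset.count_singleton]
  exact add_comm _ _

lemma pair_same_le_iff {x : ℤ} {C : Multiset ℤ} :
    ({x, x} : Multiset ℤ) ≤ C ↔ 2 ≤ C.count x := by
  rw [Multiset.le_iff_count]
  constructor
  · intro h
    have := h x
    rw [count_pair] at this
    simp at this
    omega
  · intro h b
    rw [count_pair]
    by_cases hb : b = x
    · subst hb; simpa using h
    · simp [hb]

lemma pair_le_iff {x y : ℤ} (hxy : x ≠ y) {C : Multiset ℤ} :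
    ({x, y} : Multiset ℤ) ≤ C ↔ x ∈ C ∧ y ∈ C := by
  rw [Multiset.le_iff_count]
  constructor
  · intro h
    constructor <;> rw [← Multiset.one_le_count_iff_mem]
    · have := h x
      rw [count_pair] at this
      simp [hxy] at this
      omega
    · have := h y
      rw [count_pair] at this
      simp [Ne.symm hxy] at this
      omega
  · rintro ⟨hx, hy⟩ b
    rw [← Multiset.one_le_count_iff_mem] at hx hy
    rw [count_pair]
    split_ifs with h1 h2 h2
    · exact absurd (h1.symm.trans h2) hxy
    · subst h1; omega
    · subst h2; omega
    · omega

lemma mem_deltaSet {d : ℕ} {r : Multiset ℤ} (hr : r ∈ lhsSet d) :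
    (r, ({r.sum, 0} : Multiset ℤ)) ∈ deltaSet d := Finset.mem_image_of_mem _ hr

def nzc (C : Multiset ℤ) : ℕ := Multiset.card (C.filter (fun q => q ≠ 0))

lemma nzc_add (A B : Multiset ℤ) : nzc (A + B) = nzc A + nzc B := by
  simp [nzc, Multiset.filter_add]

lemma nzc_le_card (C : Multiset ℤ) : nzc C ≤ Multiset.card C :=
  Multiset.card_le_card (Multiset.filter_le _ _)

lemma step_spec {d c : ℕ} {I : Finset ℤ} {hI : I ⊆ Qset d} {hI0 : (0:ℤ) ∉ I}
    {C C' : Multiset ℤ} (h : Step (thComp d c I hI hI0) C C') :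
    C'.sum = C.sum ∧ nzc C' + 1 ≤ nzc C ∧ ∀ q ∈ C', q ∈ Qset d ∨ q ∈ C := by
  obtain ⟨t, ht, hle, rfl⟩ := h
  rw [thComp_delta] at ht
  simp only [deltaSet, Finset.mem_image] at ht
  obtain ⟨r, hr, rfl⟩ := ht
  rw [instEq]
  obtain ⟨x, y, rfl, hx0, hy0, hxq, hyq, hsq⟩ := lhs_spec hr
  have hC : C - ({x, y} : Multiset ℤ) + ({x, y} : Multiset ℤ) = C := tsub_add_cancel_of_le hle
  refine ⟨?_, ?_, ?_⟩
  · have h1 := congrArg Multiset.sum hC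
    rw [Multiset.sum_add] at h1
    rw [Multiset.sum_add]
    simp only [Multiset.insert_eq_cons, Multiset.sum_cons, Multiset.sum_singleton] at h1 ⊢
    omega
  · have h2 : nzc ({x, y} : Multiset ℤ) = 2 := by
      simp [nzc, Multiset.insert_eq_cons, Multiset.filter_cons, Multiset.filter_singleton, hx0, hy0]
    have h1 : nzc ({(({x, y} : Multiset ℤ)).sum, 0} : Multiset ℤ) ≤ 1 := by
      have hs : (({x, y} : Multiset ℤ)).sum = x + y := by simp
      rw [hs]
      by_cases hxy : x + y = 0 <;>
        simp [nzc, Multiset.insert_eq_cons, Multiset.filter_cons, Multiset.filter_singleton, hxy]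
    have h3 := congrArg nzc hC
    rw [nzc_add, h2] at h3
    rw [nzc_add]
    dsimp only
    omega
  · intro q hq
    rw [Multiset.mem_add] at hq
    rcases hq with hq | hq
    · refine Or.inr (Multiset.mem_of_le ?_ hq)
      exact tsub_le_self
    · simp only [Multiset.insert_eq_cons, Multiset.mem_cons, Multiset.mem_singleton,
        Multiset.sum_cons, Multiset.sum_singleton] at hq
      rcases hq with rfl | rfl
      · exact Or.inl (by simpa using hsq)
      · exact Or.inl (zero_mem_Qset d)

lemma reaches_sum {d c : ℕ} {I : Finset ℤ} {hI : I ⊆ Qset d} {hI0 : (0:ℤ) ∉ I}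
    {C C' : Multiset ℤ} (h : Reaches (thComp d c I hI hI0) C C') : C'.sum = C.sum := by
  induction h with
  | refl => rfl
  | tail _ hstep ih => rw [(step_spec hstep).1, ih]

lemma reaches_memQ {d c : ℕ} {I : Finset ℤ} {hI : I ⊆ Qset d} {hI0 : (0:ℤ) ∉ I}
    {C C' : Multiset ℤ} (h : Reaches (thComp d c I hI hI0) C C')
    (hQ : ∀ q ∈ C, q ∈ Qset d) : ∀ q ∈ C', q ∈ Qset d := by
  induction h with
  | refl => exact hQ
  | tail _ hstep ih =>
    intro q hq
    rcases (step_spec hstep).2.2 q hq with h | h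
    · exact h
    · exact ih q h

lemma reaches_terminal_eq {σ : Type} {P : PopComputer σ} {C C' : Multiset σ}
    (hT : Terminal P C) (h : Reaches P C C') : C' = C := by
  rcases (Relation.ReflTransGen.cases_head h) with rfl | ⟨D, hstep, -⟩
  · rfl
  · obtain ⟨t, ht, hle, -⟩ := hstep
    exact absurd hle (hT t ht)

lemma run_nzc {d c : ℕ} {I : Finset ℤ} {hI : I ⊆ Qset d} {hI0 : (0:ℤ) ∉ I}
    (f : ℕ → Multiset ℤ) (L : ℕ)
    (h : ∀ i < L, Step (thComp d c I hI hI0) (f i) (f (i + 1))) :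
    nzc (f L) + L ≤ nzc (f 0) := by
  induction L with
  | zero => omega
  | succ n ih =>
    have h1 := (step_spec (h n (by omega))).2.1
    have := ih (fun i hi => h i (by omega))
    omega

lemma isRun_reaches {σ : Type} {P : PopComputer σ} {f : ℕ → Multiset σ}
    (h : IsRun P f) : ∀ i, Reaches P (f 0) (f i) := by
  intro i
  induction i with
  | zero => exact Relation.ReflTransGen.refl
  | succ n ih =>
    rcases h n with hstep | ⟨-, heq⟩
    · exact ih.tail hstep
    · rwa [heq]

lemma isRun_terminal {d c : ℕ} {I : Finset ℤ} {hI : I ⊆ Qset d} {hI0 : (0:ℤ) ∉ I}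
    {f : ℕ → Multiset ℤ} (h : IsRun (thComp d c I hI hI0) f) :
    ∃ i, Terminal (thComp d c I hI hI0) (f i) := by
  by_contra hc
  push_neg at hc
  have hstep : ∀ i, Step (thComp d c I hI hI0) (f i) (f (i + 1)) := by
    intro i
    rcases h i with hs | ⟨ht, -⟩
    · exact hs
    · exact absurd ht (hc i)
  have := run_nzc f (nzc (f 0) + 1) (fun i _ => hstep i)
  omega

/-! terminal facts -/
lemma terminal_facts {d c : ℕ} {I : Finset ℤ} {hI : I ⊆ Qset d} {hI0 : (0:ℤ) ∉ I}
    {C : Multiset ℤ} (hT : Terminal (thComp d c I hI hI0) C) :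
    (∀ j < d, C.count ((2:ℤ)^j) ≤ 1 ∧ C.count (-(2:ℤ)^j) ≤ 1) ∧
    (∀ j ≤ d, ¬((2:ℤ)^j ∈ C ∧ -(2:ℤ)^j ∈ C)) ∧
    (∀ j < d, ¬((2:ℤ)^(j+1) ∈ C ∧ -(2:ℤ)^j ∈ C) ∧ ¬(-(2:ℤ)^(j+1) ∈ C ∧ (2:ℤ)^j ∈ C)) := by
  have hterm : ∀ r ∈ lhsSet d, ¬ r ≤ C := by
    intro r hr
    have := hT (r, ({r.sum, 0} : Multiset ℤ)) (by rw [thComp_delta]; exact mem_deltaSet hr)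
    exact this
  have hpos : ∀ j : ℕ, (0:ℤ) < 2^j := fun j => pow_pos (by norm_num) j
  have hne : ∀ j k : ℕ, (2:ℤ)^j ≠ -(2:ℤ)^k := by
    intro j k h
    have := hpos j; have := hpos k; omega
  have mem1 : ∀ j < d, ({(2:ℤ)^j, (2:ℤ)^j} : Multiset ℤ) ∈ lhsSet d := by
    intro j hj
    simp only [lhsSet, Finset.mem_union, Finset.mem_image, Finset.mem_range]
    exact Or.inl (Or.inl (Or.inl (Or.inl ⟨j, hj, rfl⟩)))
  have mem2 : ∀ j < d, ({-(2:ℤ)^j, -(2:ℤ)^j} : Multiset ℤ) ∈ lhsSet d := by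
    intro j hj
    simp only [lhsSet, Finset.mem_union, Finset.mem_image, Finset.mem_range]
    exact Or.inl (Or.inl (Or.inl (Or.inr ⟨j, hj, rfl⟩)))
  have mem3 : ∀ j ≤ d, ({(2:ℤ)^j, -(2:ℤ)^j} : Multiset ℤ) ∈ lhsSet d := by
    intro j hj
    simp only [lhsSet, Finset.mem_union, Finset.mem_image, Finset.mem_range]
    exact Or.inl (Or.inl (Or.inr ⟨j, by omega, rfl⟩))
  have mem4 : ∀ j < d, ({(2:ℤ)^(j+1), -(2:ℤ)^j} : Multiset ℤ) ∈ lhsSet d := by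
    intro j hj
    simp only [lhsSet, Finset.mem_union, Finset.mem_image, Finset.mem_range]
    exact Or.inl (Or.inr ⟨j, hj, rfl⟩)
  have mem5 : ∀ j < d, ({-(2:ℤ)^(j+1), (2:ℤ)^j} : Multiset ℤ) ∈ lhsSet d := by
    intro j hj
    simp only [lhsSet, Finset.mem_union, Finset.mem_image, Finset.mem_range]
    exact Or.inr ⟨j, hj, rfl⟩
  refine ⟨?_, ?_, ?_⟩
  · intro j hj
    constructor
    · have := hterm _ (mem1 j hj)
      rw [pair_same_le_iff] at this
      omega
    · have := hterm _ (mem2 j hj)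
      rw [pair_same_le_iff] at this
      omega
  · intro j hj hmem
    exact hterm _ (mem3 j hj) ((pair_le_iff (hne j j)).mpr hmem)
  · intro j hj
    constructor
    · intro hmem
      exact hterm _ (mem4 j hj) ((pair_le_iff (hne (j+1) j)).mpr hmem)
    · intro hmem
      refine hterm _ (mem5 j hj) ((pair_le_iff ?_).mpr hmem)
      exact fun h => hne j (j+1) h.symm

lemma geom2 (n : ℕ) : ∑ j ∈ Finset.range n, (2:ℤ)^j = 2^n - 1 := by
  induction n with
  | zero => simp
  | succ n ih => rw [Finset.sum_range_succ, ih, pow_succ]; ring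

lemma pow2_inj : Function.Injective (fun j : ℕ => (2:ℤ)^j) := by
  intro i j h
  simp only at h
  have : ((2^i : ℕ) : ℤ) = ((2^j : ℕ) : ℤ) := by push_cast; exact h
  exact Nat.pow_right_injective (by norm_num) (Nat.cast_injective this)

lemma terminal_sum_iff {d : ℕ} (hd : 1 ≤ d) {c : ℕ} (hc : (c:ℤ) ≤ 2^(d-1))
    {C : Multiset ℤ} (hQ : ∀ q ∈ C, q ∈ Qset d)
    (h1 : ∀ j < d, C.count ((2:ℤ)^j) ≤ 1 ∧ C.count (-(2:ℤ)^j) ≤ 1)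
    (h2 : ∀ j ≤ d, ¬((2:ℤ)^j ∈ C ∧ -(2:ℤ)^j ∈ C))
    (h3 : ∀ j < d, ¬((2:ℤ)^(j+1) ∈ C ∧ -(2:ℤ)^j ∈ C) ∧ ¬(-(2:ℤ)^(j+1) ∈ C ∧ (2:ℤ)^j ∈ C)) :
    ((c:ℤ) ≤ ∑ q ∈ C.toFinset, q ↔ (c:ℤ) ≤ C.sum) := by
  obtain ⟨e, rfl⟩ : ∃ e, d = e + 1 := ⟨d - 1, by omega⟩
  rw [Nat.add_sub_cancel] at hc
  set d := e + 1 with hd'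
  have hpos : ∀ j : ℕ, (0:ℤ) < 2^j := fun j => pow_pos (by norm_num) j
  have hsum : C.sum = ∑ q ∈ C.toFinset, (C.count q : ℤ) * q := by
    rw [Finset.sum_multiset_count]
    exact Finset.sum_congr rfl fun q _ => by rw [nsmul_eq_mul]
  have hcount1 : ∀ q ∈ C.toFinset, 1 ≤ C.count q := fun q hq => by
    rw [Multiset.one_le_count_iff_mem]; exact Multiset.mem_toFinset.mp hq
  have hdiff : C.sum - ∑ q ∈ C.toFinset, q = ∑ q ∈ C.toFinset, ((C.count q : ℤ) - 1) * q := by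
    rw [hsum, ← Finset.sum_sub_distrib]
    exact Finset.sum_congr rfl fun q _ => by ring
  by_cases hP : 2 ≤ C.count ((2:ℤ)^d)
  · -- both sides true
    have hPd : (2:ℤ)^d ∈ C := by rw [← Multiset.one_le_count_iff_mem]; omega
    have hnd : -(2:ℤ)^d ∉ C := fun h => h2 d le_rfl ⟨hPd, h⟩
    have hnei : -(2:ℤ)^e ∉ C := fun h => (h3 e (by omega)).1 ⟨hPd, h⟩
    have hneg : ∀ q ∈ C.toFinset, ¬ (0:ℤ) ≤ q → ∃ j < e, q = -(2:ℤ)^j := by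
      intro q hq hq0
      have hqC := Multiset.mem_toFinset.mp hq
      rcases mem_Qset_iff.mp (hQ q hqC) with rfl | ⟨j, hj, rfl | rfl⟩
      · omega
      · exact absurd (hpos j).le hq0
      · refine ⟨j, ?_, rfl⟩
        rcases Nat.lt_or_ge j e with h | h
        · exact h
        · exfalso
          have : j = e ∨ j = e + 1 := by omega
          rcases this with rfl | rfl
          · exact hnei hqC
          · exact hnd hqC
    have hnegcount : ∀ q ∈ C.toFinset, ¬ (0:ℤ) ≤ q → C.count q = 1 := by
      intro q hq hq0
      obtain ⟨j, hj, rfl⟩ := hneg q hq hq0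
      have ha := (h1 j (by omega)).2
      have hb := hcount1 _ hq
      omega
    have hL : (c:ℤ) ≤ ∑ q ∈ C.toFinset, q := by
      have hsplit := Finset.sum_filter_add_sum_filter_not C.toFinset
        (fun q => (0:ℤ) ≤ q) (fun q => q)
      have hposle : (2:ℤ)^d ≤ ∑ q ∈ C.toFinset.filter (fun q => (0:ℤ) ≤ q), q := by
        apply Finset.single_le_sum (f := fun q : ℤ => q)
        · intro i hi; exact (Finset.mem_filter.mp hi).2
        · exact Finset.mem_filter.mpr ⟨Multiset.mem_toFinset.mpr hPd, (hpos d).le⟩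
      have hnegsub : C.toFinset.filter (fun q => ¬(0:ℤ) ≤ q) ⊆
          (Finset.range e).image (fun j => -(2:ℤ)^j) := by
        intro q hq
        obtain ⟨hq1, hq2⟩ := Finset.mem_filter.mp hq
        obtain ⟨j, hj, rfl⟩ := hneg q hq1 hq2
        exact Finset.mem_image.mpr ⟨j, Finset.mem_range.mpr hj, rfl⟩
      have himg : ∑ q ∈ (Finset.range e).image (fun j => -(2:ℤ)^j), q = -(2^e - 1) := by
        rw [Finset.sum_image (fun i _ j _ h => pow2_inj (neg_inj.mp h))]
        have hh : ∑ j ∈ Finset.range e, -((2:ℤ)^j) = -(2^e - 1) := by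
          rw [Finset.sum_neg_distrib, geom2]
        exact hh
      have hnegle : -(2^e - 1 : ℤ) ≤ ∑ q ∈ C.toFinset.filter (fun q => ¬(0:ℤ) ≤ q), q := by
        rw [← himg]
        have hmono := Finset.sum_le_sum_of_subset_of_nonneg (f := fun q : ℤ => -q) hnegsub ?_
        · have hA : ∑ q ∈ C.toFinset.filter (fun q => ¬(0:ℤ) ≤ q), -q
              = -∑ q ∈ C.toFinset.filter (fun q => ¬(0:ℤ) ≤ q), q := Finset.sum_neg_distrib _
          have hB : ∑ q ∈ (Finset.range e).image (fun j => -(2:ℤ)^j), -q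
              = -∑ q ∈ (Finset.range e).image (fun j => -(2:ℤ)^j), q := Finset.sum_neg_distrib _
          linarith
        · intro q hq _
          obtain ⟨j, -, rfl⟩ := Finset.mem_image.mp hq
          simp [(hpos j).le]
      have h2d : (2:ℤ)^d = 2 * 2^e := by rw [hd', pow_succ]; ring
      linarith
    have hR : (c:ℤ) ≤ C.sum := by
      have hterm : ∀ q ∈ C.toFinset, 0 ≤ ((C.count q : ℤ) - 1) * q := by
        intro q hq
        by_cases hq0 : (0:ℤ) ≤ q
        · refine mul_nonneg ?_ hq0
          have := hcount1 q hq
          push_cast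
          omega
        · rw [hnegcount q hq hq0]
          simp
      have hnn := Finset.sum_nonneg hterm
      rw [← hdiff] at hnn
      linarith
    exact iff_of_true hL hR
  · by_cases hN : 2 ≤ C.count (-(2:ℤ)^d)
    · -- both sides false
      have hNd : -(2:ℤ)^d ∈ C := by rw [← Multiset.one_le_count_iff_mem]; omega
      have hpd : (2:ℤ)^d ∉ C := fun h => h2 d le_rfl ⟨h, hNd⟩
      have hpe : (2:ℤ)^e ∉ C := fun h => (h3 e (by omega)).2 ⟨hNd, h⟩
      have hposchar : ∀ q ∈ C.toFinset, (0:ℤ) ≤ q → q = 0 ∨ ∃ j < e, q = (2:ℤ)^j := by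
        intro q hq hq0
        have hqC := Multiset.mem_toFinset.mp hq
        rcases mem_Qset_iff.mp (hQ q hqC) with rfl | ⟨j, hj, rfl | rfl⟩
        · exact Or.inl rfl
        · refine Or.inr ⟨j, ?_, rfl⟩
          rcases Nat.lt_or_ge j e with h | h
          · exact h
          · exfalso
            have : j = e ∨ j = e + 1 := by omega
            rcases this with rfl | rfl
            · exact hpe hqC
            · exact hpd hqC
        · exfalso
          have := hpos j
          omega
      have hposcount : ∀ q ∈ C.toFinset, (0:ℤ) < q → C.count q = 1 := by
        intro q hq hq0
        rcases hposchar q hq hq0.le with rfl | ⟨j, hj, rfl⟩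
        · omega
        · have ha := (h1 j (by omega)).1
          have hb := hcount1 _ hq
          omega
      have hL : ∑ q ∈ C.toFinset, q ≤ -(2:ℤ)^e - 1 := by
        have hsplit := Finset.sum_filter_add_sum_filter_not C.toFinset
          (fun q => (0:ℤ) ≤ q) (fun q => q)
        have hpossub : C.toFinset.filter (fun q => (0:ℤ) ≤ q) ⊆
            insert 0 ((Finset.range e).image (fun j => (2:ℤ)^j)) := by
          intro q hq
          obtain ⟨hq1, hq2⟩ := Finset.mem_filter.mp hq
          rcases hposchar q hq1 hq2 with rfl | ⟨j, hj, rfl⟩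
          · exact Finset.mem_insert_self _ _
          · exact Finset.mem_insert_of_mem (Finset.mem_image.mpr ⟨j, Finset.mem_range.mpr hj, rfl⟩)
        have himg : ∑ q ∈ insert 0 ((Finset.range e).image (fun j => (2:ℤ)^j)), q
            = 2^e - 1 := by
          rw [Finset.sum_insert (by
            intro h
            obtain ⟨j, -, hj⟩ := Finset.mem_image.mp h
            exact (hpos j).ne' hj)]
          rw [Finset.sum_image (fun i _ j _ h => pow2_inj h), geom2]
          ring
        have hposle : ∑ q ∈ C.toFinset.filter (fun q => (0:ℤ) ≤ q), q ≤ 2^e - 1 := by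
          rw [← himg]
          refine Finset.sum_le_sum_of_subset_of_nonneg hpossub ?_
          intro q hq _
          rcases Finset.mem_insert.mp hq with rfl | hq'
          · exact le_refl 0
          · obtain ⟨j, -, rfl⟩ := Finset.mem_image.mp hq'
            exact (hpos j).le
        have hnegle : ∑ q ∈ C.toFinset.filter (fun q => ¬(0:ℤ) ≤ q), q ≤ -(2:ℤ)^d := by
          have hmem : -(2:ℤ)^d ∈ C.toFinset.filter (fun q => ¬(0:ℤ) ≤ q) := by
            refine Finset.mem_filter.mpr ⟨Multiset.mem_toFinset.mpr hNd, ?_⟩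
            have := hpos d
            omega
          have := Finset.single_le_sum (f := fun q : ℤ => -q) (s := C.toFinset.filter (fun q => ¬(0:ℤ) ≤ q)) ?_ hmem
          · simp only [neg_neg] at this
            have hA : ∑ q ∈ C.toFinset.filter (fun q => ¬(0:ℤ) ≤ q), -q
                = -∑ q ∈ C.toFinset.filter (fun q => ¬(0:ℤ) ≤ q), q := Finset.sum_neg_distrib _
            linarith
          · intro i hi
            have := (Finset.mem_filter.mp hi).2
            show (0:ℤ) ≤ -i
            omega
        have h2d : (2:ℤ)^d = 2 * 2^e := by rw [hd', pow_succ]; ring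
        linarith
      have hR : C.sum ≤ ∑ q ∈ C.toFinset, q := by
        have hterm : ∀ q ∈ C.toFinset, ((C.count q : ℤ) - 1) * q ≤ 0 := by
          intro q hq
          rcases lt_trichotomy q 0 with hq0 | rfl | hq0
          · refine mul_nonpos_of_nonneg_of_nonpos ?_ hq0.le
            have := hcount1 q hq
            push_cast
            omega
          · simp
          · rw [hposcount q hq hq0]
            simp
        have hnp := Finset.sum_nonpos hterm
        rw [← hdiff] at hnp
        linarith
      have hc0 : (0:ℤ) ≤ (c:ℤ) := Int.natCast_nonneg c
      have he := hpos e
      refine iff_of_false (by omega) (by omega)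
    · -- counts all ≤ 1 : sums coincide
      push_neg at hP hN
      have hone : ∀ q ∈ C.toFinset, (C.count q : ℤ) * q = q := by
        intro q hq
        by_cases hq0 : q = 0
        · subst hq0; ring
        · have hcq : C.count q = 1 := by
            have hb := hcount1 q hq
            rcases mem_Qset_iff.mp (hQ q (Multiset.mem_toFinset.mp hq)) with rfl | ⟨j, hj, rfl | rfl⟩
            · exact absurd rfl hq0
            · rcases Nat.lt_or_ge j d with h | h
              · have := (h1 j h).1
                omega
              · have : j = d := by omega
                subst this
                omega
            · rcases Nat.lt_or_ge j d with h | h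
              · have := (h1 j h).2
                omega
              · have : j = d := by omega
                subst this
                omega
          rw [hcq]
          push_cast
          ring
      rw [hsum, Finset.sum_congr rfl hone]

/-- Lemma 6.9: population computers for threshold predicates. -/
theorem stmt7 (v : ℕ) (a : Fin v → ℤ) (c : ℕ)
    (ha : ∀ i, ∃ j : ℕ, a i = 2 ^ j ∨ a i = -(2 ^ j)) (d : ℕ) (hd : 1 ≤ d)
    (hcd : (c : ℤ) ≤ 2 ^ (d - 1)) (had : ∀ i, |a i| ≤ 2 ^ d) :
    ∃ P : PopComputer ℤ,
      P.Q = insert 0 ((((Finset.range (d + 1)).image fun j => (2 : ℤ) ^ j) ∪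
              ((Finset.range (d + 1)).image fun j => -((2 : ℤ) ^ j)))) ∧
      P.I = Finset.univ.image a ∧
      P.H = Multiset.replicate d (0 : ℤ) ∧
      (∀ S : Finset ℤ, S ⊆ P.Q → P.O S = some (decide ((c : ℤ) ≤ ∑ q ∈ S, q))) ∧
      Binary P ∧ Bounded P ∧
      (∀ x : Fin v → ℕ,
        HasOutput P (inputConfig a x) (decide ((c : ℤ) ≤ ∑ i, a i * (x i : ℤ)))) ∧
      (∀ C0 : Multiset ℤ, (∃ CI, IsInput P CI ∧ Initial P CI C0) →
        ∀ f : ℕ → Multiset ℤ, f 0 = C0 →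
          ∀ L : ℕ, (∀ i < L, Step P (f i) (f (i + 1))) → L ≤ Multiset.card C0) := by
  have hpos : ∀ j : ℕ, (0:ℤ) < 2^j := fun j => pow_pos (by norm_num) j
  have hI : Finset.univ.image a ⊆ Qset d := by
    intro q hq
    obtain ⟨i, -, rfl⟩ := Finset.mem_image.mp hq
    obtain ⟨j, hj | hj⟩ := ha i
    · rw [hj]
      refine pow_mem_Qset (pow2_le_iff.mp ?_)
      have h := had i
      rw [hj, abs_of_pos (hpos j)] at h
      exact h
    · rw [hj]
      refine neg_pow_mem_Qset (pow2_le_iff.mp ?_)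
      have h := had i
      rw [hj, abs_neg, abs_of_pos (hpos j)] at h
      exact h
  have hI0 : (0:ℤ) ∉ Finset.univ.image a := by
    intro h
    obtain ⟨i, -, hi⟩ := Finset.mem_image.mp h
    obtain ⟨j, hj | hj⟩ := ha i <;> rw [hj] at hi
    · exact (hpos j).ne' hi
    · exact (hpos j).ne (by linarith)
  refine ⟨thComp d c (Finset.univ.image a) hI hI0, rfl, rfl, rfl, fun S _ => rfl, ?_, ?_, ?_, ?_⟩
  · -- Binary
    intro t ht
    rw [thComp_delta] at ht
    simp only [deltaSet, Finset.mem_image] at ht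
    obtain ⟨r, hr, rfl⟩ := ht
    obtain ⟨x, y, rfl, -⟩ := lhs_spec hr
    simp
  · -- Bounded
    rintro ⟨f, -, hsteps⟩
    have := run_nzc f (nzc (f 0) + 1) (fun i _ => hsteps i)
    omega
  · -- HasOutput
    intro x C0 f hinit hfair hf0
    obtain ⟨CH, hCH, -, rfl⟩ := hinit
    have hC0Q : ∀ q ∈ inputConfig a x + CH, q ∈ Qset d := by
      intro q hq
      rw [Multiset.mem_add] at hq
      rcases hq with hq | hq
      · obtain ⟨i, rfl⟩ := inputConfig_mem hq
        exact hI (Finset.mem_image.mpr ⟨i, Finset.mem_univ i, rfl⟩)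
      · rw [Multiset.eq_of_mem_replicate (hCH q hq)]
        exact zero_mem_Qset d
    have hC0sum : (inputConfig a x + CH).sum = ∑ i, a i * (x i : ℤ) := by
      rw [Multiset.sum_add, inputConfig_sum,
        Multiset.sum_eq_zero (fun q hq => Multiset.eq_of_mem_replicate (hCH q hq))]
      ring
    obtain ⟨i0, hterm⟩ := isRun_terminal hfair.1
    refine ⟨i0, ?_⟩
    intro C hreach
    rw [reaches_terminal_eq hterm hreach]
    have hreach0 := isRun_reaches hfair.1 i0
    rw [hf0] at hreach0
    have hQf := reaches_memQ hreach0 hC0Q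
    have hsumf := reaches_sum hreach0
    obtain ⟨t1, t2, t3⟩ := terminal_facts hterm
    have hiff := terminal_sum_iff hd hcd hQf t1 t2 t3
    show some _ = some _
    congr 1
    rw [decide_eq_decide]
    rw [hiff, hsumf, hC0sum]
  · -- run length
    rintro C0 - f hf0 L hsteps
    have h := run_nzc f L hsteps
    have h2 := nzc_le_card (f 0)
    rw [hf0] at h h2
    omega


end PaperPP
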